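/- For all n ≥ 1, (π/2^n) · Σ_{k=1}^{2^{n-1}} 1/(2cos((2k-1)π/2^{n+1}) + 1) < π/4. -/

import Mathlib

open Real Filter Finset

noncomputable def X (n : ℕ) : ℝ := 2 * Real.cos (Real.pi / 2 ^ (n + 1))

-- chord bound for cos (concavity)
lemma cos_chord {a b x : ℝ} (ha : 0 ≤ a) (hb : b ≤ π/2) (hax : a ≤ x) (hxb : x ≤ b)
    (hab : a < b) :
    (b - x) / (b - a) * Real.cos a + (x - a) / (b - a) * Real.cos b ≤ Real.cos x := by
  have hpi := Real.pi_pos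
  have hc := strictConcaveOn_sin_Icc.concaveOn
  have h1 : (π/2 - a) ∈ Set.Icc (0:ℝ) π := by constructor <;> [linarith; linarith]
  have h2 : (π/2 - b) ∈ Set.Icc (0:ℝ) π := by constructor <;> [linarith; linarith]
  have hba : (0:ℝ) < b - a := by linarith
  have hw1 : (0:ℝ) ≤ (b - x)/(b - a) := by apply div_nonneg <;> linarith
  have hw2 : (0:ℝ) ≤ (x - a)/(b - a) := by apply div_nonneg <;> linarith
  have hsum : (b - x)/(b - a) + (x - a)/(b - a) = 1 := by field_simp; ring
  have := hc.2 h1 h2 hw1 hw2 hsum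
  simp only [smul_eq_mul] at this
  have harg : (b - x)/(b - a) * (π/2 - a) + (x - a)/(b - a) * (π/2 - b) = π/2 - x := by
    field_simp; ring
  rw [harg, Real.sin_pi_div_two_sub] at this
  rw [Real.sin_pi_div_two_sub, Real.sin_pi_div_two_sub] at this
  linarith

-- chord bound for f(x) = 1/(2 cos x + 1)
lemma f_chord {a b x : ℝ} (ha : 0 ≤ a) (hb : b ≤ π/2) (hax : a ≤ x) (hxb : x ≤ b)
    (hab : a < b) :
    1 / (2 * Real.cos x + 1) ≤
      (b - x) / (b - a) * (1 / (2 * Real.cos a + 1)) +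
      (x - a) / (b - a) * (1 / (2 * Real.cos b + 1)) := by
  have hpi := Real.pi_pos
  have hca : 0 ≤ Real.cos a := Real.cos_nonneg_of_mem_Icc ⟨by linarith, by linarith⟩
  have hcb : 0 ≤ Real.cos b := Real.cos_nonneg_of_mem_Icc ⟨by linarith, by linarith⟩
  have hcx : 0 ≤ Real.cos x := Real.cos_nonneg_of_mem_Icc ⟨by linarith, by linarith⟩
  have hba : (0:ℝ) < b - a := by linarith
  set w1 := (b - x)/(b - a) with hw1def
  set w2 := (x - a)/(b - a) with hw2def
  have hw1 : (0:ℝ) ≤ w1 := by apply div_nonneg <;> linarith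
  have hw2 : (0:ℝ) ≤ w2 := by apply div_nonneg <;> linarith
  have hsum : w1 + w2 = 1 := by rw [hw1def, hw2def]; field_simp; ring
  have hchord := cos_chord ha hb hax hxb hab
  set A := 2 * Real.cos a + 1 with hA
  set B := 2 * Real.cos b + 1 with hB
  have hA1 : (1:ℝ) ≤ A := by simp [hA]; linarith
  have hB1 : (1:ℝ) ≤ B := by simp [hB]; linarith
  have hAB : (0:ℝ) < w1 * A + w2 * B := by nlinarith
  have step1 : 1 / (2 * Real.cos x + 1) ≤ 1 / (w1 * A + w2 * B) := by
    apply one_div_le_one_div_of_le hAB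
    nlinarith
  refine step1.trans ?_
  rw [div_le_iff₀ hAB]
  have hApos : (0:ℝ) < A := by linarith
  have hBpos : (0:ℝ) < B := by linarith
  have e1 : w1 * (1/A) = w1 / A := by ring
  have e2 : w2 * (1/B) = w2 / B := by ring
  rw [e1, e2, div_add_div _ _ (ne_of_gt hApos) (ne_of_gt hBpos), div_mul_eq_mul_div,
    le_div_iff₀ (by positivity)]
  have hw2' : w2 = 1 - w1 := by linarith
  have key : (w1 * B + A * w2) * (w1 * A + w2 * B) = A * B + w1 * w2 * (A - B)^2 := by
    rw [hw2']; ring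
  nlinarith [mul_nonneg (mul_nonneg hw1 hw2) (sq_nonneg (A - B))]

lemma chunk_sum (p j : ℕ) (hj : j ≤ 3) :
    ∑ k ∈ Finset.Ico (j * 2^p) ((j+1) * 2^p),
      1 / (2 * Real.cos ((2 * (k:ℝ) + 1) * π / 2 ^ (p + 4)) + 1)
    ≤ 2^p * ((1/(2*Real.cos ((j:ℝ)*π/8)+1) + 1/(2*Real.cos (((j:ℝ)+1)*π/8)+1)) / 2) := by
  have hpi := Real.pi_pos
  set M : ℕ := 2^p with hM
  have hMpos : 0 < (M:ℝ) := by positivity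
  set a : ℝ := (j:ℝ)*π/8 with ha
  set b : ℝ := ((j:ℝ)+1)*π/8 with hb
  set fa : ℝ := 1/(2*Real.cos a+1) with hfa
  set fb : ℝ := 1/(2*Real.cos b+1) with hfb
  have h16 : ((2:ℝ)) ^ (p+4) = 16 * M := by
    rw [hM]; push_cast; ring
  have hx : ∀ i : ℕ, i < M → ((2 * ((j*M+i : ℕ):ℝ) + 1) * π / 2 ^ (p + 4)) =
      (2*(j:ℝ)*M + 2*i + 1) * π / (16*M) := by
    intro i _; rw [h16]; push_cast; ring
  rw [Finset.sum_Ico_eq_sum_range]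
  have hcard : (j+1) * M - j * M = M := by rw [add_one_mul, Nat.add_sub_cancel_left]
  rw [hcard]
  have key : ∀ i ∈ Finset.range M,
      1 / (2 * Real.cos ((2 * ((j*M+i : ℕ):ℝ) + 1) * π / 2 ^ (p + 4)) + 1) ≤
      (b - (2*(j:ℝ)*M + 2*i + 1) * π / (16*M)) / (b - a) * fa
        + ((2*(j:ℝ)*M + 2*i + 1) * π / (16*M) - a) / (b - a) * fb := by
    intro i hi
    rw [hx i (Finset.mem_range.mp hi)]
    apply f_chord
    · positivity
    · rw [hb]
      have : ((j:ℝ)+1) ≤ 4 := by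
        have : (j:ℝ) ≤ 3 := by exact_mod_cast hj
        linarith
      nlinarith
    · rw [ha, div_le_div_iff₀ (by norm_num) (by positivity)]
      have hi' : (0:ℝ) ≤ i := by positivity
      nlinarith
    · rw [hb, div_le_div_iff₀ (by positivity) (by norm_num)]
      have hi' : (i:ℝ) ≤ M - 1 := by
        have : (i:ℝ) + 1 ≤ M := by exact_mod_cast Finset.mem_range.mp hi
        linarith
      nlinarith
    · rw [ha, hb]
      have : (0:ℝ) < π/8 := by linarith
      nlinarith
  refine (Finset.sum_le_sum key).trans ?_
  have hba : b - a = π/8 := by rw [ha, hb]; ring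
  have expand : ∀ i ∈ Finset.range M,
      (b - (2*(j:ℝ)*M + 2*i + 1) * π / (16*M)) / (b - a) * fa
        + ((2*(j:ℝ)*M + 2*i + 1) * π / (16*M) - a) / (b - a) * fb
      = (fa + fb)/2 + ((fb - fa) * (2*(i:ℝ) + 1 - M)) / (2*M) := by
    intro i _
    rw [hba, ha, hb]
    field_simp
    ring
  rw [Finset.sum_congr rfl expand, Finset.sum_add_distrib]
  have hGauss : ∑ i ∈ Finset.range M, (i:ℝ) = M*(M-1)/2 := by
    have h := Finset.sum_range_id_mul_two M
    have h' : ((∑ i ∈ Finset.range M, i) * 2 : ℕ) = (M * (M-1) : ℕ) := by rw [h]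
    have hM1 : 1 ≤ M := Nat.one_le_two_pow
    have := congrArg (Nat.cast (R := ℝ)) h'
    push_cast [Nat.cast_sub hM1] at this
    linarith
  have hsum2 : ∑ i ∈ Finset.range M, ((fb - fa) * (2*(i:ℝ) + 1 - M)) / (2*M) = 0 := by
    rw [← Finset.sum_div, ← Finset.mul_sum]
    have : ∑ i ∈ Finset.range M, (2*(i:ℝ) + 1 - M) = 0 := by
      rw [Finset.sum_sub_distrib, Finset.sum_add_distrib, ← Finset.mul_sum, hGauss]
      simp
      ring
    rw [this]; simp
  rw [hsum2, Finset.sum_const, Finset.card_range]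
  simp only [hfa, hfb]
  exact le_of_eq (by ring)

lemma sqrt2_lb : (1.4142135:ℝ) < Real.sqrt 2 := by
  rw [Real.lt_sqrt (by norm_num)]; norm_num

lemma sqrt2_ub : Real.sqrt 2 < (1.4142136:ℝ) := by
  rw [Real.sqrt_lt' (by norm_num)]; norm_num

lemma s1_lb : (1.847759:ℝ) < Real.sqrt (2 + Real.sqrt 2) := by
  rw [Real.lt_sqrt (by norm_num)]; nlinarith [sqrt2_lb]

lemma s2_lb : (0.765366:ℝ) < Real.sqrt (2 - Real.sqrt 2) := by
  rw [Real.lt_sqrt (by norm_num)]; nlinarith [sqrt2_ub]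

lemma cos_3pi8 : Real.cos (3*π/8) = Real.sqrt (2 - Real.sqrt 2) / 2 := by
  rw [show (3*π/8 : ℝ) = π/2 - π/8 by ring, Real.cos_pi_div_two_sub, Real.sin_pi_div_eight]

lemma reduce (n : ℕ) (S : ℝ) (h : 4 * S < 2^n) : (π/2^n) * S < π/4 := by
  have hpi := Real.pi_pos
  have h2 : (0:ℝ) < 2^n := by positivity
  rw [div_mul_eq_mul_div, div_lt_div_iff₀ h2 (by norm_num)]
  nlinarith [mul_lt_mul_of_pos_left h hpi]

theorem stmt15 (n : ℕ) (hn : 1 ≤ n) :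
    (Real.pi / 2 ^ n) * ∑ k ∈ Finset.range (2 ^ (n - 1)),
      1 / (2 * Real.cos ((2 * k + 1) * Real.pi / 2 ^ (n + 1)) + 1) <
      Real.pi / 4 := by
  have hpi := Real.pi_pos
  apply reduce
  match n, hn with
  | 1, _ =>
    have hs2 := Real.sqrt_nonneg 2
    norm_num [Finset.sum_range_succ, Real.cos_pi_div_four]
    have hinv : (Real.sqrt 2 + 1) * (2 * (Real.sqrt 2/2) + 1)⁻¹ = 1 := by
      rw [show 2 * (Real.sqrt 2/2) + 1 = Real.sqrt 2 + 1 by ring]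
      apply mul_inv_cancel₀; positivity
    nlinarith [sqrt2_lb, inv_nonneg.mpr (show (0:ℝ) ≤ 2*(Real.sqrt 2/2)+1 by positivity)]
  | 2, _ =>
    norm_num [Finset.sum_range_succ, Real.cos_pi_div_eight]
    rw [cos_3pi8]
    have e1 : 2 * (Real.sqrt (2+Real.sqrt 2)/2) + 1 = Real.sqrt (2+Real.sqrt 2) + 1 := by ring
    have e2 : 2 * (Real.sqrt (2-Real.sqrt 2)/2) + 1 = Real.sqrt (2-Real.sqrt 2) + 1 := by ring
    rw [e1, e2]
    have b1 : (Real.sqrt (2+Real.sqrt 2) + 1)⁻¹ < 1/2.847759 := by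
      rw [inv_eq_one_div]
      apply one_div_lt_one_div_of_lt (by norm_num)
      linarith [s1_lb]
    have b2 : (Real.sqrt (2-Real.sqrt 2) + 1)⁻¹ < 1/1.765366 := by
      rw [inv_eq_one_div]
      apply one_div_lt_one_div_of_lt (by norm_num)
      linarith [s2_lb]
    nlinarith [b1, b2]
  | (m+3), _ =>
    set p := m with hp
    simp only [show p+3-1 = p+2 by omega, show p+3+1 = p+4 by omega]
    have c0 := chunk_sum p 0 (by norm_num)
    have c1 := chunk_sum p 1 (by norm_num)
    have c2 := chunk_sum p 2 (by norm_num)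
    have c3 := chunk_sum p 3 (by norm_num)
    norm_num at c0 c1 c2 c3
    rw [show (2*π/8 : ℝ) = π/4 by ring] at c1 c2
    rw [show (4*π/8 : ℝ) = π/2 by ring] at c3
    rw [Real.cos_pi_div_four] at c1 c2
    rw [Real.cos_pi_div_two] at c3
    rw [cos_3pi8] at c2 c3
    norm_num at c3
    set g : ℕ → ℝ := fun k => (2 * Real.cos ((2 * (k:ℝ) + 1) * π / 2 ^ (p + 4)) + 1)⁻¹
      with hg
    have hsplit : ∑ k ∈ Finset.range (2^(p+2)), g k
        = (∑ k ∈ Finset.range (2^p), g k)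
        + (∑ k ∈ Finset.Ico (2^p) (2*2^p), g k)
        + (∑ k ∈ Finset.Ico (2*2^p) (3*2^p), g k)
        + (∑ k ∈ Finset.Ico (3*2^p) (4*2^p), g k) := by
      rw [Finset.range_eq_Ico, Finset.range_eq_Ico]
      rw [Finset.sum_Ico_consecutive g (Nat.zero_le _) (by linarith [Nat.zero_le (2^p)])]
      rw [Finset.sum_Ico_consecutive g (Nat.zero_le _) (by linarith [Nat.zero_le (2^p)])]
      rw [Finset.sum_Ico_consecutive g (Nat.zero_le _) (by linarith [Nat.zero_le (2^p)])]
      congr 1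
      rw [pow_add]; ring
    simp only [one_div]
    rw [hsplit]
    set u1 : ℝ := (2 * (Real.sqrt (2+Real.sqrt 2)/2) + 1)⁻¹ with hu1
    set u2 : ℝ := (2 * (Real.sqrt 2/2) + 1)⁻¹ with hu2
    set u3 : ℝ := (2 * (Real.sqrt (2-Real.sqrt 2)/2) + 1)⁻¹ with hu3
    have b1 : u1 < 1/2.847759 := by
      rw [hu1, inv_eq_one_div]
      apply one_div_lt_one_div_of_lt (by norm_num)
      nlinarith [s1_lb]
    have b2 : u2 < 1/2.4142135 := by
      rw [hu2, inv_eq_one_div]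
      apply one_div_lt_one_div_of_lt (by norm_num)
      nlinarith [sqrt2_lb]
    have b3 : u3 < 1/1.765366 := by
      rw [hu3, inv_eq_one_div]
      apply one_div_lt_one_div_of_lt (by norm_num)
      nlinarith [s2_lb]
    have hP : (0:ℝ) < 2^p := by positivity
    have hfin : (1/3 + u1)/2 + (u1 + u2)/2 + (u2 + u3)/2 + (u3 + 1)/2 < 2 := by
      nlinarith [b1, b2, b3]
    have htot : (∑ k ∈ Finset.range (2^p), g k)
        + (∑ k ∈ Finset.Ico (2^p) (2*2^p), g k)
        + (∑ k ∈ Finset.Ico (2*2^p) (3*2^p), g k)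
        + (∑ k ∈ Finset.Ico (3*2^p) (4*2^p), g k)
        ≤ 2^p * ((1/3 + u1)/2 + (u1 + u2)/2 + (u2 + u3)/2 + (u3 + 1)/2) := by
      have := add_le_add (add_le_add (add_le_add c0 c1) c2) c3
      calc _ ≤ 2^p*((1/3 + u1)/2) + 2^p*((u1 + u2)/2) + 2^p*((u2 + u3)/2) + 2^p*((u3 + 1)/2) := this
        _ = 2^p * ((1/3 + u1)/2 + (u1 + u2)/2 + (u2 + u3)/2 + (u3 + 1)/2) := by ring
    have hlt : 2^p * ((1/3 + u1)/2 + (u1 + u2)/2 + (u2 + u3)/2 + (u3 + 1)/2) < 2^p * 2 :=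
      mul_lt_mul_of_pos_left hfin hP
    have e28 : (2:ℝ)^(p+3) = 8 * 2^p := by rw [pow_add]; ring
    rw [e28]
    linarith
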